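/- Let d ≥ 1, r > 0, and let V̂ : ℤ^d → ℝ satisfy V̂(k) = 0 for |k| > r, V̂(−k) = V̂(k), and V̂(0) = 0; write ‖V̂‖₁ = (2π)^{−d}·∑_{k∈ℤ^d}|V̂(k)|. There exists a constant C > 0, depending only on d and ‖V̂‖₁, such that whenever λ > 0 satisfies λ·‖V̂‖₁ ≤ 1/2, then for every summable f : ℤ^d → ℝ and every t > 0: sup_{p∈ℤ^d} |Q_t[f](p) − t·𝒬[f](p)| ≤ C·t·(1/t² + (λt)²)·(sup_p|1 − f(p)|)²·((2π)^{−d}·∑_p|f(p)|)·(sup_p|f(p)|). -/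

import Mathlib

open Real

/-- The Euclidean norm of a lattice point in `ℤ^d`. -/
noncomputable def zNorm {d : ℕ} (p : Fin d → ℤ) : ℝ := Real.sqrt (∑ i, ((p i : ℝ)) ^ 2)

/-- The indicator `χ` of the Fermi ball of radius `p_F`. -/
noncomputable def chi {d : ℕ} (pF : ℝ) (p : Fin d → ℤ) : ℝ := if zNorm p ≤ pF then 1 else 0

/-- The indicator `χ^⊥ = 1 − χ` of the complement of the Fermi ball. -/
noncomputable def chiP {d : ℕ} (pF : ℝ) (p : Fin d → ℤ) : ℝ := 1 - chi pF p

/-- The profile of the mollified delta function: `δ₁(E) = (2/π)·sin²(E/2)/E²` for `E ≠ 0`,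
extended by its limit `1/(2π)` at `E = 0`. -/
noncomputable def delta1 (E : ℝ) : ℝ :=
  if E = 0 then 1 / (2 * π) else (2 / π) * (Real.sin (E / 2)) ^ 2 / E ^ 2

/-- The mollified delta function `δ_t(E) = t·δ₁(t·E)`. -/
noncomputable def deltaT (t E : ℝ) : ℝ := t * delta1 (t * E)

/-- The normalized convolution `(V̂⋆g)(q) = (2π)^{−d}·∑_k V̂(k)·g(q−k)`. -/
noncomputable def conv {d : ℕ} (Vh g : (Fin d → ℤ) → ℝ) (q : Fin d → ℤ) : ℝ :=
  ((2 * π) ^ d)⁻¹ * ∑' k : Fin d → ℤ, Vh k * g (q - k)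

/-- The `ℓ¹`-norm `‖V̂‖₁ = (2π)^{−d}·∑_k |V̂(k)|`. -/
noncomputable def VhatL1 {d : ℕ} (Vh : (Fin d → ℤ) → ℝ) : ℝ :=
  ((2 * π) ^ d)⁻¹ * ∑' k : Fin d → ℤ, |Vh k|

/-- The dispersion relation
`E_q = χ^⊥(q)·(|q|²/2 − (λ/2)·(V̂⋆χ)(q)) − χ(q)·(|q|²/2 + (λ/2)·(V̂⋆χ^⊥)(q))`. -/
noncomputable def disp {d : ℕ} (pF lam : ℝ) (Vh : (Fin d → ℤ) → ℝ) (q : Fin d → ℤ) : ℝ :=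
  chiP pF q * ((zNorm q) ^ 2 / 2 - (lam / 2) * conv Vh (chi pF) q)
    - chi pF q * ((zNorm q) ^ 2 / 2 + (lam / 2) * conv Vh (chiP pF) q)

/-- The collision kernel `σ(p₁,p₂,p₃,p₄)`. -/
noncomputable def collisionKernel {d : ℕ} (pF : ℝ) (Vh : (Fin d → ℤ) → ℝ)
    (p₁ p₂ p₃ p₄ : Fin d → ℤ) : ℝ :=
  (if p₁ + p₂ = p₃ + p₄ then 1 else 0) *
      (chi pF p₁ * chi pF p₂ * chi pF p₃ * chi pF p₄
        + chiP pF p₁ * chiP pF p₂ * chiP pF p₃ * chiP pF p₄) *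
      (Vh (p₁ - p₄) - Vh (p₁ - p₃)) ^ 2
    + 2 * (if p₁ - p₂ = p₃ - p₄ then 1 else 0) *
      (chi pF p₁ * chi pF p₃ * chiP pF p₂ * chiP pF p₄
        + chiP pF p₁ * chiP pF p₃ * chi pF p₂ * chi pF p₄) *
      (Vh (p₁ - p₃)) ^ 2

/-- The signed free dispersion `e(q) = (χ^⊥(q) − χ(q))·|q|²/2`. -/
noncomputable def freeDisp {d : ℕ} (pF : ℝ) (q : Fin d → ℤ) : ℝ :=
  (chiP pF q - chi pF q) * (zNorm q) ^ 2 / 2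

/-- The energy-mollified collision operator `Q_t`. -/
noncomputable def Qt {d : ℕ} (pF lam t : ℝ) (Vh f : (Fin d → ℤ) → ℝ)
    (p : Fin d → ℤ) : ℝ :=
  4 * π * ((2 * π) ^ (3 * d))⁻¹ *
    ∑' (p₂ : Fin d → ℤ) (p₃ : Fin d → ℤ) (p₄ : Fin d → ℤ),
      collisionKernel pF Vh p p₂ p₃ p₄ *
        deltaT t (disp pF lam Vh p + disp pF lam Vh p₂
          - disp pF lam Vh p₃ - disp pF lam Vh p₄) *
        (f p₃ * f p₄ * (1 - f p) * (1 - f p₂) - f p * f p₂ * (1 - f p₃) * (1 - f p₄))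

/-- The limiting quantum Boltzmann collision operator `𝒬`. -/
noncomputable def Qlim {d : ℕ} (pF : ℝ) (Vh f : (Fin d → ℤ) → ℝ) (p : Fin d → ℤ) : ℝ :=
  4 * π * ((2 * π) ^ (3 * d))⁻¹ *
    ∑' (p₂ : Fin d → ℤ) (p₃ : Fin d → ℤ) (p₄ : Fin d → ℤ),
      collisionKernel pF Vh p p₂ p₃ p₄ * (1 / (2 * π)) *
        (if freeDisp pF p + freeDisp pF p₂ - freeDisp pF p₃ - freeDisp pF p₄ = 0
          then 1 else 0) *
        (f p₃ * f p₄ * (1 - f p) * (1 - f p₂) - f p * f p₂ * (1 - f p₃) * (1 - f p₄))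


set_option maxHeartbeats 1000000

lemma delta1_nonneg (x : ℝ) : 0 ≤ delta1 x := by
  unfold delta1; split <;> positivity

lemma delta1_le (x : ℝ) : delta1 x ≤ 1 / (2 * π) := by
  unfold delta1
  split
  · exact le_refl _
  · rename_i hx
    have h1 : Real.sin (x/2) ^ 2 ≤ (x/2) ^ 2 := Real.sin_sq_le_sq
    have hx2 : (0:ℝ) < x ^ 2 := by positivity
    have hπ : (0:ℝ) < π := Real.pi_pos
    rw [div_le_iff₀ hx2]
    calc 2 / π * Real.sin (x/2) ^ 2 ≤ 2 / π * ((x/2)^2) := by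
          apply mul_le_mul_of_nonneg_left h1; positivity
      _ = 1 / (2*π) * x ^ 2 := by field_simp

lemma delta1_far {x : ℝ} (hx : x ≠ 0) : delta1 x ≤ (2 / π) / x ^ 2 := by
  unfold delta1
  rw [if_neg hx]
  have hs : Real.sin (x/2) ^ 2 ≤ 1 := Real.sin_sq_le_one _
  have hx2 : (0:ℝ) < x ^ 2 := by positivity
  have hπ : (0:ℝ) < π := Real.pi_pos
  gcongr
  nlinarith [hs, div_nonneg (by norm_num : (0:ℝ) ≤ 2) hπ.le]

lemma abs_sin_sub_le {y : ℝ} (hy : |y| ≤ 1) : |Real.sin y - y| ≤ |y| ^ 3 / 4 := by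
  rcases lt_trichotomy y 0 with h | h | h
  · have h1 : Real.sin (-y) < -y := Real.sin_lt (by linarith)
    have h2 : (-y) - (-y)^3/4 < Real.sin (-y) := by have := Real.sin_gt_sub_cube (x := -y) (by linarith); nlinarith [pow_pos (by linarith : (0:ℝ) < -y) 3]
    rw [Real.sin_neg] at h1 h2
    rw [abs_of_neg h]
    rw [abs_of_pos (by nlinarith : 0 < Real.sin y - y)]
    nlinarith
  · simp [h]
  · have h1 : Real.sin y < y := Real.sin_lt h
    have h2 : y - y^3/4 < Real.sin y := by have := Real.sin_gt_sub_cube h; nlinarith [pow_pos h 3]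
    rw [abs_of_pos h, abs_of_neg (by linarith : Real.sin y - y < 0)]
    nlinarith

lemma delta1_near (x : ℝ) : |delta1 x - 1 / (2 * π)| ≤ x ^ 2 := by
  have hπ : (3:ℝ) < π := Real.pi_gt_three
  by_cases hx : x = 0
  · simp [hx, delta1]
  by_cases hx1 : 1 ≤ |x|
  · have h1 : 0 ≤ delta1 x := delta1_nonneg x
    have h2 : delta1 x ≤ 1 / (2*π) := delta1_le x
    have h3 : (1:ℝ) ≤ x ^ 2 := by nlinarith [abs_nonneg x, sq_abs x]
    have h4 : 1/(2*π) ≤ (1:ℝ) := by rw [div_le_one (by linarith)]; linarith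
    rw [abs_le]
    constructor <;> nlinarith
  · push_neg at hx1
    have hy : |x/2| ≤ 1 := by rw [abs_div]; simp; nlinarith [abs_nonneg x]
    have h1 : |Real.sin (x/2) - x/2| ≤ |x/2| ^ 3 / 4 := abs_sin_sub_le hy
    have h2 : |Real.sin (x/2) + x/2| ≤ 2 * |x/2| := by
      calc |Real.sin (x/2) + x/2| ≤ |Real.sin (x/2)| + |x/2| := abs_add_le _ _
        _ ≤ 2 * |x/2| := by nlinarith [Real.abs_sin_le_abs (x := x/2)]
    have h3 : |Real.sin (x/2)^2 - (x/2)^2| ≤ |x/2|^4 / 2 := by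
      have heq : Real.sin (x/2)^2 - (x/2)^2 = (Real.sin (x/2) - x/2) * (Real.sin (x/2) + x/2) := by ring
      rw [heq, abs_mul]
      calc |Real.sin (x/2) - x/2| * |Real.sin (x/2) + x/2| ≤ (|x/2|^3/4) * (2*|x/2|) := by
            apply mul_le_mul h1 h2 (abs_nonneg _) (by positivity)
        _ = |x/2|^4 / 2 := by ring
    have h4 : |x/2|^4 = x^4/16 := by
      have : |x/2|^4 = (x/2)^4 := by
        rw [show (4:ℕ) = 2*2 from rfl, pow_mul, pow_mul, sq_abs]
      rw [this]; ring
    rw [h4] at h3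
    have hx2 : (0:ℝ) < x ^ 2 := by positivity
    have key : delta1 x - 1/(2*π) = (2/π) * (Real.sin (x/2)^2 - (x/2)^2) / x^2 := by
      unfold delta1
      rw [if_neg hx]
      field_simp
    rw [key, abs_div, abs_mul, abs_of_pos (by positivity : (0:ℝ) < 2/π), abs_of_pos hx2,
      div_le_iff₀ hx2]
    have h5 : 2/π ≤ (1:ℝ) := by rw [div_le_one (by linarith)]; linarith
    nlinarith [abs_nonneg (Real.sin (x/2)^2 - (x/2)^2), sq_nonneg (x^2)]

lemma deltaT_comparison {N1 lam t N E de : ℝ} (hN0 : 0 ≤ N) (hNN1 : N ≤ N1)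
    (hl : 0 < lam) (hlN : lam * N ≤ 1/2) (ht : 0 < t) (hde : ∃ n : ℤ, de = n / 2)
    (hEd : |E - de| ≤ 2 * (lam * N)) :
    |deltaT t E - t * (1/(2*π) * (if de = 0 then 1 else 0))|
      ≤ 11 * (1 + N1 + N1^2) * t * (1/t^2 + (lam*t)^2) := by
  have hπ : (3:ℝ) < π := Real.pi_gt_three
  have hN10 : 0 ≤ N1 := le_trans hN0 hNN1
  by_cases h0 : de = 0
  · rw [if_pos h0]
    rw [h0] at hEd; rw [sub_zero] at hEd
    have h1 : |deltaT t E - t * (1/(2*π)*1)| = t * |delta1 (t*E) - 1/(2*π)| := by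
      rw [deltaT, mul_one, ← mul_sub, abs_mul, abs_of_pos ht]
    rw [h1]
    have h2 : |delta1 (t*E) - 1/(2*π)| ≤ (t*E)^2 := delta1_near (t*E)
    have h3 : (t*E)^2 ≤ (2*(lam*N)*t)^2 := by
      have : |t*E| ≤ 2*(lam*N)*t := by
        rw [abs_mul, abs_of_pos ht]
        calc t * |E| ≤ t * (2*(lam*N)) := by
              apply mul_le_mul_of_nonneg_left hEd ht.le
          _ = 2*(lam*N)*t := by ring
      calc (t*E)^2 = |t*E|^2 := (sq_abs _).symm
        _ ≤ (2*(lam*N)*t)^2 := by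
            apply pow_le_pow_left₀ (abs_nonneg _) this
    have h4 : (2*(lam*N)*t)^2 = 4*N^2*(lam*t)^2 := by ring
    have h5 : 4*N^2 ≤ 11*(1+N1+N1^2) := by nlinarith
    have h6 : (0:ℝ) ≤ (lam*t)^2 := sq_nonneg _
    have h7 : (0:ℝ) < 1/t^2 := by positivity
    calc t * |delta1 (t*E) - 1/(2*π)| ≤ t * (4*N^2*(lam*t)^2) := by
          apply mul_le_mul_of_nonneg_left (h2.trans (h3.trans_eq h4)) ht.le
      _ ≤ t * (11*(1+N1+N1^2)*(lam*t)^2) := by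
          apply mul_le_mul_of_nonneg_left (mul_le_mul_of_nonneg_right h5 h6) ht.le
      _ ≤ 11*(1+N1+N1^2) * t * (1/t^2 + (lam*t)^2) := by nlinarith [mul_pos ht h7, mul_nonneg (mul_nonneg (by nlinarith : (0:ℝ) ≤ 11*(1+N1+N1^2)) ht.le) h7.le]
  · rw [if_neg h0, mul_zero, mul_zero, sub_zero]
    obtain ⟨n, hn⟩ := hde
    have hn0 : n ≠ 0 := by rintro rfl; simp at hn; exact h0 hn
    have hde2 : (1:ℝ)/2 ≤ |de| := by
      rw [hn, abs_div]
      have : (1:ℝ) ≤ |(n:ℝ)| := by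
        rw [← Int.cast_abs]; exact_mod_cast Int.one_le_abs hn0
      rw [abs_of_pos (by norm_num : (0:ℝ) < 2)]
      linarith
    have hdT : |deltaT t E| = t * delta1 (t*E) := by
      rw [deltaT, abs_mul, abs_of_pos ht, abs_of_nonneg (delta1_nonneg _)]
    rw [hdT]
    by_cases hsmall : lam * N ≤ 1/8
    · have hE : (1:ℝ)/4 ≤ |E| := by
        have := abs_sub_abs_le_abs_sub de E
        rw [abs_sub_comm de E] at this
        linarith
      have hEne : t * E ≠ 0 := by
        intro h
        have : E = 0 := by
          rcases mul_eq_zero.1 h with h' | h'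
          · exact absurd h' ht.ne'
          · exact h'
        rw [this] at hE; simp at hE; linarith
      have h1 : delta1 (t*E) ≤ (2/π)/(t*E)^2 := delta1_far hEne
      have h2 : (t*E)^2 ≥ t^2 * (1/16) := by
        have : |E|^2 ≥ (1/4)^2 := by
          apply pow_le_pow_left₀ (by norm_num) hE
        rw [mul_pow]
        rw [← sq_abs E]
        nlinarith [sq_nonneg t]
      have hπpos : (0:ℝ) < π := by linarith
      have h3 : (2/π)/(t*E)^2 ≤ (2/π)/(t^2*(1/16)) := by
        apply div_le_div_of_nonneg_left (by positivity) (by positivity) h2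
      have h4 : (2/π)/(t^2*(1/16)) = 32/(π*t^2) := by field_simp; ring
      calc t * delta1 (t*E) ≤ t * (32/(π*t^2)) := by
            apply mul_le_mul_of_nonneg_left ((h1.trans h3).trans_eq h4) ht.le
        _ = 32/(π*t) := by field_simp
        _ ≤ 11 * (1/t) := by
            rw [div_le_iff₀ (by positivity)]
            have he : 11 * (1/t) * (π*t) = 11*π := by field_simp
            rw [he]; nlinarith
        _ = 11 * t * (1/t^2) := by field_simp
        _ ≤ 11*(1+N1+N1^2) * t * (1/t^2 + (lam*t)^2) := by
            have hM : (1:ℝ) ≤ 1+N1+N1^2 := by nlinarith [sq_nonneg N1]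
            have hq : 1/t^2 ≤ 1/t^2 + (lam*t)^2 := by nlinarith [sq_nonneg (lam*t)]
            calc 11 * t * (1/t^2) ≤ 11 * t * (1/t^2 + (lam*t)^2) :=
                  mul_le_mul_of_nonneg_left hq (by positivity)
              _ ≤ 11*(1+N1+N1^2) * t * (1/t^2 + (lam*t)^2) := by
                  apply mul_le_mul_of_nonneg_right ?_ (by positivity)
                  nlinarith [mul_le_mul_of_nonneg_right hM ht.le]
    · push_neg at hsmall
      have hN1pos : 0 < N1 := by nlinarith
      have hNpos : 0 < N := by nlinarith
      have hlam : 1/(8*N1) ≤ lam := by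
        rw [div_le_iff₀ (by positivity)]
        have h8N : 1/(8*N) ≤ lam := by
          rw [div_le_iff₀ (by positivity)]
          nlinarith
        nlinarith [mul_le_mul_of_nonneg_left hNN1 hl.le]
      have h1 : t * delta1 (t*E) ≤ t * (1/(2*π)) :=
        mul_le_mul_of_nonneg_left (delta1_le _) ht.le
      have h2 : 1/(4*N1) ≤ 1/t^2 + (lam*t)^2 := by
        have hlt : t/(8*N1) ≤ lam*t := by
          calc t/(8*N1) = (1/(8*N1))*t := by ring
            _ ≤ lam*t := mul_le_mul_of_nonneg_right hlam ht.le
        have h3 : (t/(8*N1))^2 ≤ (lam*t)^2 := by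
          apply pow_le_pow_left₀ (by positivity) hlt
        have h4 : 2 * (1/t) * (t/(8*N1)) ≤ (1/t)^2 + (t/(8*N1))^2 :=
          two_mul_le_add_sq _ _
        have h5 : 2 * (1/t) * (t/(8*N1)) = 1/(4*N1) := by field_simp; ring
        have h6 : (1/t)^2 = 1/t^2 := by rw [div_pow]; norm_num
        linarith
      have hkey : 1/(2*π) ≤ 11*(1+N1+N1^2) * (1/(4*N1)) := by
        have e1 : 11*N1*(1/(4*N1)) ≤ 11*(1+N1+N1^2)*(1/(4*N1)) := by
          apply mul_le_mul_of_nonneg_right ?_ (by positivity)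
          nlinarith
        have e2 : 11*N1*(1/(4*N1)) = 11/4 := by field_simp
        have e3 : 1/(2*π) ≤ 1/6 := by
          apply one_div_le_one_div_of_le (by norm_num) (by linarith)
        linarith
      calc t * delta1 (t*E) ≤ t * (1/(2*π)) := h1
        _ ≤ t * (11*(1+N1+N1^2) * (1/(4*N1))) := mul_le_mul_of_nonneg_left hkey ht.le
        _ ≤ t * (11*(1+N1+N1^2) * (1/t^2 + (lam*t)^2)) := by
            apply mul_le_mul_of_nonneg_left ?_ ht.le
            apply mul_le_mul_of_nonneg_left h2 (by positivity)
        _ = 11*(1+N1+N1^2) * t * (1/t^2 + (lam*t)^2) := by ring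

section Aux
variable {d : ℕ}

lemma zNorm_sq (q : Fin d → ℤ) : zNorm q ^ 2 = ((∑ i, (q i)^2 : ℤ) : ℝ) := by
  unfold zNorm
  rw [Real.sq_sqrt (by positivity)]
  push_cast
  rfl

lemma summable_of_ball_support {r : ℝ} {W : (Fin d → ℤ) → ℝ}
    (h : ∀ k, r < zNorm k → W k = 0) : Summable W := by
  have hfin : (Function.support W).Finite := by
    apply Set.Finite.subset (Set.Finite.pi (fun i : Fin d =>
      Set.finite_Icc (-(⌈r⌉)) ⌈r⌉))
    intro k hk
    have hz : zNorm k ≤ r := by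
      by_contra hc
      exact hk (h k (lt_of_not_ge hc))
    have hr0 : 0 ≤ r := le_trans (Real.sqrt_nonneg _) hz
    have hsq : ∑ j, ((k j : ℝ))^2 ≤ r^2 := by
      have h1 : zNorm k ^ 2 ≤ r ^ 2 := by
        apply pow_le_pow_left₀ (Real.sqrt_nonneg _) hz
      rw [zNorm, Real.sq_sqrt (by positivity)] at h1
      exact h1
    intro i _
    have h2 : ((k i : ℝ))^2 ≤ r^2 := by
      have : ((k i : ℝ))^2 ≤ ∑ j, ((k j : ℝ))^2 :=
        Finset.single_le_sum (f := fun j => ((k j : ℝ))^2)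
          (fun j _ => by positivity) (Finset.mem_univ i)
      linarith
    have h4 : |(k i : ℝ)| ≤ r := by
      rw [← Real.sqrt_sq_eq_abs, show r = Real.sqrt (r^2) from (Real.sqrt_sq hr0).symm]
      exact Real.sqrt_le_sqrt h2
    rw [abs_le] at h4
    simp only [Set.mem_Icc]
    constructor
    · have : (-(⌈r⌉:ℝ)) ≤ (k i : ℝ) := le_trans (by nlinarith [Int.le_ceil r]) h4.1
      exact_mod_cast this
    · have : (k i : ℝ) ≤ (⌈r⌉:ℝ) := le_trans h4.2 (Int.le_ceil r)
      exact_mod_cast this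
  exact summable_of_finite_support hfin

lemma chi_nonneg (pF : ℝ) (q : Fin d → ℤ) : 0 ≤ chi pF q := by
  unfold chi; split <;> norm_num

lemma chi_le_one (pF : ℝ) (q : Fin d → ℤ) : chi pF q ≤ 1 := by
  unfold chi; split <;> norm_num

lemma chiP_nonneg (pF : ℝ) (q : Fin d → ℤ) : 0 ≤ chiP pF q := by
  unfold chiP; linarith [chi_le_one pF q]

lemma chiP_le_one (pF : ℝ) (q : Fin d → ℤ) : chiP pF q ≤ 1 := by
  unfold chiP; linarith [chi_nonneg pF q]

lemma conv_abs_le {Vh g : (Fin d → ℤ) → ℝ} (hVh : Summable Vh)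
    (hg : ∀ x, |g x| ≤ 1) (q : Fin d → ℤ) : |conv Vh g q| ≤ VhatL1 Vh := by
  unfold conv VhatL1
  rw [abs_mul, abs_of_pos (by positivity : (0:ℝ) < ((2*π)^d)⁻¹)]
  apply mul_le_mul_of_nonneg_left ?_ (by positivity)
  have hsum : Summable fun k => Vh k * g (q - k) := by
    apply Summable.of_abs
    apply Summable.of_nonneg_of_le (fun k => abs_nonneg _) ?_ hVh.abs
    intro k
    rw [abs_mul]
    calc |Vh k| * |g (q-k)| ≤ |Vh k| * 1 := by
          apply mul_le_mul_of_nonneg_left (hg _) (abs_nonneg _)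
      _ = |Vh k| := mul_one _
  have habs : |∑' k, Vh k * g (q - k)| ≤ ∑' k, |Vh k * g (q - k)| := by
    have := norm_tsum_le_tsum_norm (f := fun k => Vh k * g (q-k)) hsum.norm
    simpa only [Real.norm_eq_abs] using this
  calc |∑' k, Vh k * g (q - k)| ≤ ∑' k, |Vh k * g (q - k)| := habs
    _ ≤ ∑' k, |Vh k| := by
        apply Summable.tsum_le_tsum ?_ hsum.abs hVh.abs
        intro k
        rw [abs_mul]
        calc |Vh k| * |g (q-k)| ≤ |Vh k| * 1 := by
              apply mul_le_mul_of_nonneg_left (hg _) (abs_nonneg _)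
          _ = |Vh k| := mul_one _

lemma VhatL1_nonneg (Vh : (Fin d → ℤ) → ℝ) : 0 ≤ VhatL1 Vh := by
  unfold VhatL1
  apply mul_nonneg (by positivity) (tsum_nonneg (fun k => abs_nonneg _))

lemma disp_sub_free {pF lam : ℝ} {Vh : (Fin d → ℤ) → ℝ} (hVh : Summable Vh)
    (hlam : 0 ≤ lam) (q : Fin d → ℤ) :
    |disp pF lam Vh q - freeDisp pF q| ≤ lam / 2 * VhatL1 Vh := by
  have hc1 : |conv Vh (chi pF) q| ≤ VhatL1 Vh :=
    conv_abs_le hVh (fun x => by rw [abs_of_nonneg (chi_nonneg _ _)]; exact chi_le_one _ _) q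
  have hc2 : |conv Vh (chiP pF) q| ≤ VhatL1 Vh :=
    conv_abs_le hVh (fun x => by rw [abs_of_nonneg (chiP_nonneg _ _)]; exact chiP_le_one _ _) q
  have hP : chiP pF q = 1 - chi pF q := rfl
  by_cases h : zNorm q ≤ pF
  · have hq : chi pF q = 1 := by unfold chi; rw [if_pos h]
    have heq : disp pF lam Vh q - freeDisp pF q = -(lam/2*conv Vh (chiP pF) q) := by
      unfold disp freeDisp
      rw [hP, hq]; ring
    rw [heq, abs_neg, abs_mul, abs_of_nonneg (by positivity : (0:ℝ) ≤ lam/2)]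
    apply mul_le_mul_of_nonneg_left hc2 (by positivity)
  · have hq : chi pF q = 0 := by unfold chi; rw [if_neg h]
    have heq : disp pF lam Vh q - freeDisp pF q = -(lam/2*conv Vh (chi pF) q) := by
      unfold disp freeDisp
      rw [hP, hq]; ring
    rw [heq, abs_neg, abs_mul, abs_of_nonneg (by positivity : (0:ℝ) ≤ lam/2)]
    apply mul_le_mul_of_nonneg_left hc1 (by positivity)

lemma freeDisp_half (pF : ℝ) (q : Fin d → ℤ) : ∃ n : ℤ, freeDisp pF q = n / 2 := by
  have hP : chiP pF q = 1 - chi pF q := rfl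
  by_cases h : zNorm q ≤ pF
  · refine ⟨-(∑ i, (q i)^2), ?_⟩
    have hq : chi pF q = 1 := by unfold chi; rw [if_pos h]
    unfold freeDisp
    rw [hP, hq, zNorm_sq]
    push_cast
    ring
  · refine ⟨∑ i, (q i)^2, ?_⟩
    have hq : chi pF q = 0 := by unfold chi; rw [if_neg h]
    unfold freeDisp
    rw [hP, hq, zNorm_sq]
    push_cast
    ring
lemma prod4_bounds {x y z w : ℝ} (hx0 : 0 ≤ x) (hx1 : x ≤ 1) (hy0 : 0 ≤ y) (hy1 : y ≤ 1)
    (hz0 : 0 ≤ z) (hz1 : z ≤ 1) (hw0 : 0 ≤ w) (hw1 : w ≤ 1) :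
    0 ≤ x*y*z*w ∧ x*y*z*w ≤ 1 := by
  refine ⟨by positivity, ?_⟩
  nlinarith [mul_nonneg hx0 hy0, mul_nonneg (mul_nonneg hx0 hy0) hz0,
    mul_le_one₀ hx1 hy0 hy1, mul_le_one₀ (mul_le_one₀ hx1 hy0 hy1) hz0 hz1,
    mul_le_one₀ (mul_le_one₀ (mul_le_one₀ hx1 hy0 hy1) hz0 hz1) hw0 hw1]

lemma kernel_nonneg (pF : ℝ) (Vh : (Fin d → ℤ) → ℝ) (p₁ p₂ p₃ p₄ : Fin d → ℤ) :
    0 ≤ collisionKernel pF Vh p₁ p₂ p₃ p₄ := by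
  unfold collisionKernel
  have i1 : (0:ℝ) ≤ (if p₁ + p₂ = p₃ + p₄ then (1:ℝ) else 0) := by split <;> norm_num
  have i2 : (0:ℝ) ≤ (if p₁ - p₂ = p₃ - p₄ then (1:ℝ) else 0) := by split <;> norm_num
  have c1 := prod4_bounds (chi_nonneg pF p₁) (chi_le_one pF p₁) (chi_nonneg pF p₂) (chi_le_one pF p₂) (chi_nonneg pF p₃) (chi_le_one pF p₃) (chi_nonneg pF p₄) (chi_le_one pF p₄)
  have c2 := prod4_bounds (chiP_nonneg pF p₁) (chiP_le_one pF p₁) (chiP_nonneg pF p₂) (chiP_le_one pF p₂) (chiP_nonneg pF p₃) (chiP_le_one pF p₃) (chiP_nonneg pF p₄) (chiP_le_one pF p₄)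
  have c3 := prod4_bounds (chi_nonneg pF p₁) (chi_le_one pF p₁) (chi_nonneg pF p₃) (chi_le_one pF p₃) (chiP_nonneg pF p₂) (chiP_le_one pF p₂) (chiP_nonneg pF p₄) (chiP_le_one pF p₄)
  have c4 := prod4_bounds (chiP_nonneg pF p₁) (chiP_le_one pF p₁) (chiP_nonneg pF p₃) (chiP_le_one pF p₃) (chi_nonneg pF p₂) (chi_le_one pF p₂) (chi_nonneg pF p₄) (chi_le_one pF p₄)
  have s1 : (0:ℝ) ≤ (Vh (p₁ - p₄) - Vh (p₁ - p₃))^2 := sq_nonneg _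
  have s2 : (0:ℝ) ≤ (Vh (p₁ - p₃))^2 := sq_nonneg _
  apply add_nonneg
  · apply mul_nonneg (mul_nonneg i1 (by linarith [c1.1, c2.1])) s1
  · apply mul_nonneg (mul_nonneg (by linarith [i2] : (0:ℝ) ≤ 2 * (if p₁ - p₂ = p₃ - p₄ then (1:ℝ) else 0)) (by linarith [c3.1, c4.1])) s2

lemma kernel_le (pF : ℝ) (Vh : (Fin d → ℤ) → ℝ) (p₁ p₂ p₃ p₄ : Fin d → ℤ) :
    collisionKernel pF Vh p₁ p₂ p₃ p₄ ≤ 4 * Vh (p₁ - p₄)^2 + 8 * Vh (p₁ - p₃)^2 := by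
  unfold collisionKernel
  have i1 : (if p₁ + p₂ = p₃ + p₄ then (1:ℝ) else 0) ≤ 1 := by split <;> norm_num
  have i1' : (0:ℝ) ≤ (if p₁ + p₂ = p₃ + p₄ then (1:ℝ) else 0) := by split <;> norm_num
  have i2 : (if p₁ - p₂ = p₃ - p₄ then (1:ℝ) else 0) ≤ 1 := by split <;> norm_num
  have i2' : (0:ℝ) ≤ (if p₁ - p₂ = p₃ - p₄ then (1:ℝ) else 0) := by split <;> norm_num
  have c1 := prod4_bounds (chi_nonneg pF p₁) (chi_le_one pF p₁) (chi_nonneg pF p₂) (chi_le_one pF p₂) (chi_nonneg pF p₃) (chi_le_one pF p₃) (chi_nonneg pF p₄) (chi_le_one pF p₄)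
  have c2 := prod4_bounds (chiP_nonneg pF p₁) (chiP_le_one pF p₁) (chiP_nonneg pF p₂) (chiP_le_one pF p₂) (chiP_nonneg pF p₃) (chiP_le_one pF p₃) (chiP_nonneg pF p₄) (chiP_le_one pF p₄)
  have c3 := prod4_bounds (chi_nonneg pF p₁) (chi_le_one pF p₁) (chi_nonneg pF p₃) (chi_le_one pF p₃) (chiP_nonneg pF p₂) (chiP_le_one pF p₂) (chiP_nonneg pF p₄) (chiP_le_one pF p₄)
  have c4 := prod4_bounds (chiP_nonneg pF p₁) (chiP_le_one pF p₁) (chiP_nonneg pF p₃) (chiP_le_one pF p₃) (chi_nonneg pF p₂) (chi_le_one pF p₂) (chi_nonneg pF p₄) (chi_le_one pF p₄)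
  have s1 : (0:ℝ) ≤ (Vh (p₁ - p₄) - Vh (p₁ - p₃))^2 := sq_nonneg _
  have s2 : (0:ℝ) ≤ (Vh (p₁ - p₃))^2 := sq_nonneg _
  have t1 : (if p₁ + p₂ = p₃ + p₄ then (1:ℝ) else 0) *
      (chi pF p₁ * chi pF p₂ * chi pF p₃ * chi pF p₄
        + chiP pF p₁ * chiP pF p₂ * chiP pF p₃ * chiP pF p₄) *
      (Vh (p₁ - p₄) - Vh (p₁ - p₃)) ^ 2 ≤ 2 * (Vh (p₁ - p₄) - Vh (p₁ - p₃)) ^ 2 := by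
    apply mul_le_mul_of_nonneg_right ?_ s1
    nlinarith [c1.1, c1.2, c2.1, c2.2, i1, i1']
  have t2 : 2 * (if p₁ - p₂ = p₃ - p₄ then (1:ℝ) else 0) *
      (chi pF p₁ * chi pF p₃ * chiP pF p₂ * chiP pF p₄
        + chiP pF p₁ * chiP pF p₃ * chi pF p₂ * chi pF p₄) *
      (Vh (p₁ - p₃)) ^ 2 ≤ 4 * (Vh (p₁ - p₃)) ^ 2 := by
    apply mul_le_mul_of_nonneg_right ?_ s2
    nlinarith [c3.1, c3.2, c4.1, c4.2, i2, i2']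
  nlinarith [sq_nonneg (Vh (p₁ - p₄) + Vh (p₁ - p₃)), sq_nonneg (Vh (p₁-p₄)), t1, t2]

lemma kernel_vanish {pF : ℝ} {Vh : (Fin d → ℤ) → ℝ} {p₁ p₂ p₃ p₄ : Fin d → ℤ}
    (h1 : p₄ ≠ p₁ + p₂ - p₃) (h2 : p₄ ≠ p₃ - p₁ + p₂) :
    collisionKernel pF Vh p₁ p₂ p₃ p₄ = 0 := by
  unfold collisionKernel
  rw [if_neg, if_neg]
  · ring
  · intro h; apply h2
    have e1 : p₄ - (p₃ - p₁ + p₂) = (p₁ - p₂) - (p₃ - p₄) := by abel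
    rw [h, sub_self] at e1
    exact sub_eq_zero.mp e1
  · intro h; apply h1
    have e1 : p₄ - (p₁ + p₂ - p₃) = (p₃ + p₄) - (p₁ + p₂) := by abel
    rw [← h, sub_self] at e1
    exact sub_eq_zero.mp e1

lemma abs_tsum_le' {ι : Type*} {F : ι → ℝ} (h : Summable F) :
    |∑' i, F i| ≤ ∑' i, |F i| := by
  have := norm_tsum_le_tsum_norm (f := F) h.norm
  simpa only [Real.norm_eq_abs] using this

lemma summable_dom {ι : Type*} {F G : ι → ℝ} (hG : Summable G) (h : ∀ i, |F i| ≤ G i) :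
    Summable F :=
  (Summable.of_nonneg_of_le (fun i => abs_nonneg _) h hG).of_abs

lemma summable_prod_mul {X : Type*} [AddCommGroup X] {g h : X → ℝ}
    (hg : Summable g) (hh : Summable h) (hg0 : ∀ x, 0 ≤ g x) (hh0 : ∀ x, 0 ≤ h x)
    (e : (X × X) ≃ (X × X)) :
    Summable (fun q : X × X => g (e q).1 * h (e q).2) ∧
      (∑' q : X × X, g (e q).1 * h (e q).2) = (∑' x, g x) * (∑' x, h x) := by
  have hP : Summable (fun q : X × X => g q.1 * h q.2) := hg.mul_of_nonneg hh hg0 hh0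
  have hPe : Summable (fun q : X × X => g (e q).1 * h (e q).2) := by
    have := hP.comp_injective e.injective
    exact this
  refine ⟨hPe, ?_⟩
  have h1 : (∑' q : X × X, g (e q).1 * h (e q).2) = ∑' q : X × X, g q.1 * h q.2 :=
    e.tsum_eq (fun q : X × X => g q.1 * h q.2)
  rw [h1, Summable.tsum_prod' hP (fun b => (hP.prod_factor b))]
  calc ∑' a, ∑' b, g a * h b = ∑' a, g a * ∑' b, h b := by
        apply tsum_congr; intro a; exact tsum_mul_left
    _ = (∑' x, g x) * (∑' x, h x) := tsum_mul_right
end Aux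

set_option maxHeartbeats 2000000 in
/-- Comparison of `Q_t` and `t·𝒬`: there is `C > 0`, depending only on `d` and an upper
bound `N₁` for `‖V̂‖₁`, such that for every admissible `V̂`, any `p_F > 0`, any `λ > 0`
with `λ·‖V̂‖₁ ≤ 1/2`, any summable `f` and any `t > 0`,
`sup_p |Q_t[f](p) − t·𝒬[f](p)|
  ≤ C·t·(1/t² + (λt)²)·(sup|1−f|)²·((2π)^{−d}·∑|f|)·(sup|f|)`. -/
theorem stmt11 (d : ℕ) (hd : 1 ≤ d) (N1 : ℝ) :
    ∃ C : ℝ, 0 < C ∧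
      ∀ r : ℝ, 0 < r → ∀ Vh : (Fin d → ℤ) → ℝ,
        (∀ k, r < zNorm k → Vh k = 0) → (∀ k, Vh (-k) = Vh k) → Vh 0 = 0 →
        VhatL1 Vh ≤ N1 →
        ∀ pF : ℝ, 0 < pF →
        ∀ lam : ℝ, 0 < lam → lam * VhatL1 Vh ≤ 1 / 2 →
        ∀ f : (Fin d → ℤ) → ℝ, Summable f →
        ∀ t : ℝ, 0 < t →
        ∀ p : Fin d → ℤ,
          |Qt pF lam t Vh f p - t * Qlim pF Vh f p|
            ≤ C * t * (1 / t ^ 2 + (lam * t) ^ 2) * (⨆ q, |1 - f q|) ^ 2 *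
              (((2 * π) ^ d)⁻¹ * ∑' q : Fin d → ℤ, |f q|) * (⨆ q, |f q|) := by
  have hπ : (0:ℝ) < π := Real.pi_pos
  have hM0 : (0:ℝ) < 1 + N1 + N1^2 := by nlinarith [sq_nonneg (N1+1), sq_nonneg N1]
  refine ⟨2112 * π * (1 + N1 + N1^2) * (1 + N1^2), by positivity, ?_⟩
  intro r hr Vh hsupp hsymm hV0 hVN1 pF hpF lam hlam hlamN f hf t ht p
  -- basic objects
  have hVh : Summable Vh := summable_of_ball_support hsupp
  have hVh2 : Summable (fun k => Vh k ^ 2) :=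
    summable_of_ball_support (r := r) (fun k hk => by rw [hsupp k hk]; norm_num)
  have hg0 : ∀ k : Fin d → ℤ, 0 ≤ Vh k ^ 2 := fun k => sq_nonneg _
  have hfabs : Summable (fun q : Fin d → ℤ => |f q|) := hf.abs
  have hfabs0 : ∀ q : Fin d → ℤ, 0 ≤ |f q| := fun q => abs_nonneg _
  set S : ℝ := ∑' q : Fin d → ℤ, |f q| with hSdef
  have hS0 : 0 ≤ S := tsum_nonneg hfabs0
  have hfS : ∀ q, |f q| ≤ S := fun q => Summable.le_tsum hfabs q (fun b _ => abs_nonneg _)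
  set N : ℝ := VhatL1 Vh with hNdef
  have hN0 : 0 ≤ N := VhatL1_nonneg Vh
  have hN10 : 0 ≤ N1 := le_trans hN0 hVN1
  -- sup bounds
  set A : ℝ := ⨆ q : Fin d → ℤ, |1 - f q| with hAdef
  set B : ℝ := ⨆ q : Fin d → ℤ, |f q| with hBdef
  have hA : ∀ q, |1 - f q| ≤ A := by
    intro q
    apply le_ciSup (f := fun q : Fin d → ℤ => |1 - f q|) ?_ q
    refine ⟨1 + S, ?_⟩
    rintro x ⟨q', rfl⟩
    have h1 : |1 - f q'| ≤ |(1:ℝ)| + |f q'| := by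
      have := abs_add_le (1:ℝ) (-(f q'))
      simpa [sub_eq_add_neg] using this
    simp only [abs_one] at h1
    linarith [hfS q']
  have hB : ∀ q, |f q| ≤ B := by
    intro q
    apply le_ciSup (f := fun q : Fin d → ℤ => |f q|) ?_ q
    exact ⟨S, by rintro x ⟨q', rfl⟩; exact hfS q'⟩
  have hA0 : 0 ≤ A := le_trans (abs_nonneg _) (hA (fun _ => 0))
  have hB0 : 0 ≤ B := le_trans (abs_nonneg _) (hB (fun _ => 0))
  -- the delta comparison constant
  set K : ℝ := 11 * (1 + N1 + N1^2) * t * (1/t^2 + (lam*t)^2) with hKdef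
  have hK0 : 0 ≤ K := by positivity
  -- delta comparison
  have hdelta : ∀ p₂ p₃ p₄ : Fin d → ℤ,
      |deltaT t (disp pF lam Vh p + disp pF lam Vh p₂ - disp pF lam Vh p₃ - disp pF lam Vh p₄)
        - t * (1/(2*π) * (if freeDisp pF p + freeDisp pF p₂ - freeDisp pF p₃ - freeDisp pF p₄ = 0
            then 1 else 0))| ≤ K := by
    intro p₂ p₃ p₄
    apply deltaT_comparison hN0 hVN1 hlam hlamN ht
    · obtain ⟨n1, h1⟩ := freeDisp_half pF p
      obtain ⟨n2, h2⟩ := freeDisp_half pF p₂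
      obtain ⟨n3, h3⟩ := freeDisp_half pF p₃
      obtain ⟨n4, h4⟩ := freeDisp_half pF p₄
      exact ⟨n1 + n2 - n3 - n4, by rw [h1, h2, h3, h4]; push_cast; ring⟩
    · have e1 := disp_sub_free (pF := pF) hVh hlam.le p
      have e2 := disp_sub_free (pF := pF) hVh hlam.le p₂
      have e3 := disp_sub_free (pF := pF) hVh hlam.le p₃
      have e4 := disp_sub_free (pF := pF) hVh hlam.le p₄
      have key : disp pF lam Vh p + disp pF lam Vh p₂ - disp pF lam Vh p₃ - disp pF lam Vh p₄
          - (freeDisp pF p + freeDisp pF p₂ - freeDisp pF p₃ - freeDisp pF p₄)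
          = (disp pF lam Vh p - freeDisp pF p) + (disp pF lam Vh p₂ - freeDisp pF p₂)
            + (-(disp pF lam Vh p₃ - freeDisp pF p₃)) + (-(disp pF lam Vh p₄ - freeDisp pF p₄)) := by
        ring
      rw [key]
      have t1 := abs_add_le ((disp pF lam Vh p - freeDisp pF p) + (disp pF lam Vh p₂ - freeDisp pF p₂)
            + (-(disp pF lam Vh p₃ - freeDisp pF p₃))) (-(disp pF lam Vh p₄ - freeDisp pF p₄))
      have t2 := abs_add_le ((disp pF lam Vh p - freeDisp pF p) + (disp pF lam Vh p₂ - freeDisp pF p₂))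
            (-(disp pF lam Vh p₃ - freeDisp pF p₃))
      have t3 := abs_add_le (disp pF lam Vh p - freeDisp pF p) (disp pF lam Vh p₂ - freeDisp pF p₂)
      rw [abs_neg] at t1 t2
      calc |_| ≤ _ := t1
        _ ≤ _ := by
          apply add_le_add_left (t2.trans (add_le_add_left (t3.trans (add_le_add e1 e2)) _)) _
        _ ≤ 2 * (lam * N) := by nlinarith [e3, e4]

  -- local abbreviations for the summands
  set Ff : (Fin d → ℤ) → (Fin d → ℤ) → (Fin d → ℤ) → ℝ := fun p₂ p₃ p₄ =>
    f p₃ * f p₄ * (1 - f p) * (1 - f p₂) - f p * f p₂ * (1 - f p₃) * (1 - f p₄) with hFfdef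
  set a : (Fin d → ℤ) → (Fin d → ℤ) → (Fin d → ℤ) → ℝ := fun p₂ p₃ p₄ =>
    collisionKernel pF Vh p p₂ p₃ p₄ *
      deltaT t (disp pF lam Vh p + disp pF lam Vh p₂ - disp pF lam Vh p₃ - disp pF lam Vh p₄) *
      (f p₃ * f p₄ * (1 - f p) * (1 - f p₂) - f p * f p₂ * (1 - f p₃) * (1 - f p₄)) with hadef
  set bi : (Fin d → ℤ) → (Fin d → ℤ) → (Fin d → ℤ) → ℝ := fun p₂ p₃ p₄ =>
    collisionKernel pF Vh p p₂ p₃ p₄ * (1 / (2 * π)) *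
      (if freeDisp pF p + freeDisp pF p₂ - freeDisp pF p₃ - freeDisp pF p₄ = 0 then 1 else 0) *
      (f p₃ * f p₄ * (1 - f p) * (1 - f p₂) - f p * f p₂ * (1 - f p₃) * (1 - f p₄)) with hbidef
  set b : (Fin d → ℤ) → (Fin d → ℤ) → (Fin d → ℤ) → ℝ := fun p₂ p₃ p₄ =>
    t * bi p₂ p₃ p₄ with hbdef
  -- F bounds
  have hFb : ∀ p₂ p₃ p₄ : Fin d → ℤ, |Ff p₂ p₃ p₄| ≤ A^2 * B * (|f p₃| + |f p₂|) ∧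
      |Ff p₂ p₃ p₄| ≤ A^2 * B * (|f p₄| + |f p₂|) := by
    intro p₂ p₃ p₄
    have e1 : |f p₃ * f p₄ * (1 - f p) * (1 - f p₂)|
        = |f p₃| * |f p₄| * |1 - f p| * |1 - f p₂| := by
      rw [abs_mul, abs_mul, abs_mul]
    have e2 : |f p * f p₂ * (1 - f p₃) * (1 - f p₄)|
        = |f p| * |f p₂| * |1 - f p₃| * |1 - f p₄| := by
      rw [abs_mul, abs_mul, abs_mul]
    have habs : |Ff p₂ p₃ p₄| ≤ |f p₃ * f p₄ * (1 - f p) * (1 - f p₂)|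
        + |f p * f p₂ * (1 - f p₃) * (1 - f p₄)| := by
      rw [hFfdef]
      exact abs_sub _ _
    have b2 : |f p| * |f p₂| * |1 - f p₃| * |1 - f p₄| ≤ B * |f p₂| * A * A := by
      gcongr
      · exact hB p
      · exact hA p₃
      · exact hA p₄
    constructor
    · have b1 : |f p₃| * |f p₄| * |1 - f p| * |1 - f p₂| ≤ |f p₃| * B * A * A := by
        gcongr
        · exact hB p₄
        · exact hA p
        · exact hA p₂
      calc |Ff p₂ p₃ p₄| ≤ _ + _ := habs
        _ ≤ |f p₃| * B * A * A + B * |f p₂| * A * A := by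
            rw [e1, e2]; exact add_le_add b1 b2
        _ = A^2 * B * (|f p₃| + |f p₂|) := by ring
    · have b1 : |f p₃| * |f p₄| * |1 - f p| * |1 - f p₂| ≤ B * |f p₄| * A * A := by
        gcongr
        · exact hB p₃
        · exact hA p
        · exact hA p₂
      calc |Ff p₂ p₃ p₄| ≤ _ + _ := habs
        _ ≤ B * |f p₄| * A * A + B * |f p₂| * A * A := by
            rw [e1, e2]; exact add_le_add b1 b2
        _ = A^2 * B * (|f p₄| + |f p₂|) := by ring
  -- the summable majorant on the product space
  set W : ((Fin d → ℤ) × (Fin d → ℤ)) → ℝ := fun q =>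
    A^2*B*( 4*(Vh (q.2-q.1)^2 * |f q.2|) + 4*(Vh (q.2-q.1)^2 * |f q.1|)
      + 8*(Vh (p-q.2)^2 * |f (p+q.1-q.2)|) + 8*(Vh (p-q.2)^2 * |f q.1|)
      + 4*(Vh (p+p-q.1-q.2)^2 * |f q.2|) + 4*(Vh (p+p-q.1-q.2)^2 * |f q.1|)
      + 8*(Vh (p-q.2)^2 * |f (q.2-p+q.1)|) + 8*(Vh (p-q.2)^2 * |f q.1|) ) with hWdef
  have hW0 : ∀ q, 0 ≤ W q := by
    intro q
    rw [hWdef]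
    have := sq_nonneg (Vh (q.2-q.1))
    positivity
  -- the equivalences and atom sums
  let E1 : ((Fin d → ℤ) × (Fin d → ℤ)) ≃ ((Fin d → ℤ) × (Fin d → ℤ)) :=
    ⟨fun q => (q.2 - q.1, q.2), fun q => (q.2 - q.1, q.2),
     by rintro ⟨x, y⟩; simp only [Prod.mk.injEq, and_true, true_and]; abel,
     by rintro ⟨x, y⟩; simp only [Prod.mk.injEq, and_true, true_and]; abel⟩
  let E2 : ((Fin d → ℤ) × (Fin d → ℤ)) ≃ ((Fin d → ℤ) × (Fin d → ℤ)) :=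
    ⟨fun q => (q.2 - q.1, q.1), fun q => (q.2, q.2 + q.1),
     by rintro ⟨x, y⟩; simp only [Prod.mk.injEq, and_true, true_and]; abel,
     by rintro ⟨x, y⟩; simp only [Prod.mk.injEq, and_true, true_and]; abel⟩
  let E3 : ((Fin d → ℤ) × (Fin d → ℤ)) ≃ ((Fin d → ℤ) × (Fin d → ℤ)) :=
    ⟨fun q => (p - q.2, p + q.1 - q.2), fun q => (q.2 - q.1, p - q.1),
     by rintro ⟨x, y⟩; simp only [Prod.mk.injEq]; constructor <;> abel,
     by rintro ⟨x, y⟩; simp only [Prod.mk.injEq]; constructor <;> abel⟩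
  let E4 : ((Fin d → ℤ) × (Fin d → ℤ)) ≃ ((Fin d → ℤ) × (Fin d → ℤ)) :=
    ⟨fun q => (p - q.2, q.1), fun q => (q.2, p - q.1),
     by rintro ⟨x, y⟩; simp only [Prod.mk.injEq, and_true, true_and]; abel,
     by rintro ⟨x, y⟩; simp only [Prod.mk.injEq, and_true, true_and]; abel⟩
  let E5 : ((Fin d → ℤ) × (Fin d → ℤ)) ≃ ((Fin d → ℤ) × (Fin d → ℤ)) :=
    ⟨fun q => (p + p - q.1 - q.2, q.2), fun q => (p + p - q.1 - q.2, q.2),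
     by rintro ⟨x, y⟩; simp only [Prod.mk.injEq, and_true, true_and]; abel,
     by rintro ⟨x, y⟩; simp only [Prod.mk.injEq, and_true, true_and]; abel⟩
  let E6 : ((Fin d → ℤ) × (Fin d → ℤ)) ≃ ((Fin d → ℤ) × (Fin d → ℤ)) :=
    ⟨fun q => (p + p - q.1 - q.2, q.1), fun q => (q.2, p + p - q.1 - q.2),
     by rintro ⟨x, y⟩; simp only [Prod.mk.injEq, and_true, true_and]; abel,
     by rintro ⟨x, y⟩; simp only [Prod.mk.injEq, and_true, true_and]; abel⟩
  let E7 : ((Fin d → ℤ) × (Fin d → ℤ)) ≃ ((Fin d → ℤ) × (Fin d → ℤ)) :=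
    ⟨fun q => (p - q.2, q.2 - p + q.1), fun q => (q.2 + q.1, p - q.1),
     by rintro ⟨x, y⟩; simp only [Prod.mk.injEq]; constructor <;> abel,
     by rintro ⟨x, y⟩; simp only [Prod.mk.injEq]; constructor <;> abel⟩
  have hp1 : Summable (fun q : (Fin d → ℤ) × (Fin d → ℤ) => Vh (q.2-q.1)^2 * |f q.2|) ∧
      (∑' q : (Fin d → ℤ) × (Fin d → ℤ), Vh (q.2-q.1)^2 * |f q.2|) = (∑' k, Vh k^2) * S :=
    summable_prod_mul hVh2 hfabs hg0 hfabs0 E1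
  have hp2 : Summable (fun q : (Fin d → ℤ) × (Fin d → ℤ) => Vh (q.2-q.1)^2 * |f q.1|) ∧
      (∑' q : (Fin d → ℤ) × (Fin d → ℤ), Vh (q.2-q.1)^2 * |f q.1|) = (∑' k, Vh k^2) * S :=
    summable_prod_mul hVh2 hfabs hg0 hfabs0 E2
  have hp3 : Summable (fun q : (Fin d → ℤ) × (Fin d → ℤ) => Vh (p-q.2)^2 * |f (p+q.1-q.2)|) ∧
      (∑' q : (Fin d → ℤ) × (Fin d → ℤ), Vh (p-q.2)^2 * |f (p+q.1-q.2)|) = (∑' k, Vh k^2) * S :=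
    summable_prod_mul hVh2 hfabs hg0 hfabs0 E3
  have hp4 : Summable (fun q : (Fin d → ℤ) × (Fin d → ℤ) => Vh (p-q.2)^2 * |f q.1|) ∧
      (∑' q : (Fin d → ℤ) × (Fin d → ℤ), Vh (p-q.2)^2 * |f q.1|) = (∑' k, Vh k^2) * S :=
    summable_prod_mul hVh2 hfabs hg0 hfabs0 E4
  have hp5 : Summable (fun q : (Fin d → ℤ) × (Fin d → ℤ) => Vh (p+p-q.1-q.2)^2 * |f q.2|) ∧
      (∑' q : (Fin d → ℤ) × (Fin d → ℤ), Vh (p+p-q.1-q.2)^2 * |f q.2|) = (∑' k, Vh k^2) * S :=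
    summable_prod_mul hVh2 hfabs hg0 hfabs0 E5
  have hp6 : Summable (fun q : (Fin d → ℤ) × (Fin d → ℤ) => Vh (p+p-q.1-q.2)^2 * |f q.1|) ∧
      (∑' q : (Fin d → ℤ) × (Fin d → ℤ), Vh (p+p-q.1-q.2)^2 * |f q.1|) = (∑' k, Vh k^2) * S :=
    summable_prod_mul hVh2 hfabs hg0 hfabs0 E6
  have hp7 : Summable (fun q : (Fin d → ℤ) × (Fin d → ℤ) => Vh (p-q.2)^2 * |f (q.2-p+q.1)|) ∧
      (∑' q : (Fin d → ℤ) × (Fin d → ℤ), Vh (p-q.2)^2 * |f (q.2-p+q.1)|) = (∑' k, Vh k^2) * S :=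
    summable_prod_mul hVh2 hfabs hg0 hfabs0 E7
  have hinner_sum : Summable (fun q : (Fin d → ℤ) × (Fin d → ℤ) =>
      4*(Vh (q.2-q.1)^2 * |f q.2|) + 4*(Vh (q.2-q.1)^2 * |f q.1|)
      + 8*(Vh (p-q.2)^2 * |f (p+q.1-q.2)|) + 8*(Vh (p-q.2)^2 * |f q.1|)
      + 4*(Vh (p+p-q.1-q.2)^2 * |f q.2|) + 4*(Vh (p+p-q.1-q.2)^2 * |f q.1|)
      + 8*(Vh (p-q.2)^2 * |f (q.2-p+q.1)|) + 8*(Vh (p-q.2)^2 * |f q.1|)) :=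
    (((((((hp1.1.mul_left 4).add (hp2.1.mul_left 4)).add (hp3.1.mul_left 8)).add
      (hp4.1.mul_left 8)).add (hp5.1.mul_left 4)).add (hp6.1.mul_left 4)).add
      (hp7.1.mul_left 8)).add (hp4.1.mul_left 8)
  have hWsum : Summable W := hinner_sum.mul_left (A^2*B)
  have s1 := hp1.1.mul_left (4:ℝ)
  have s2 := hp2.1.mul_left (4:ℝ)
  have s3 := hp3.1.mul_left (8:ℝ)
  have s4 := hp4.1.mul_left (8:ℝ)
  have s5 := hp5.1.mul_left (4:ℝ)
  have s6 := hp6.1.mul_left (4:ℝ)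
  have s7 := hp7.1.mul_left (8:ℝ)
  have s8 := hp4.1.mul_left (8:ℝ)
  have q12 := s1.add s2
  have q13 := q12.add s3
  have q14 := q13.add s4
  have q15 := q14.add s5
  have q16 := q15.add s6
  have q17 := q16.add s7
  have hWtotal : ∑' q : (Fin d → ℤ) × (Fin d → ℤ), W q
      = A^2*B*(48*((∑' k, Vh k^2) * S)) := by
    rw [hWdef]
    rw [tsum_mul_left]
    congr 1
    rw [Summable.tsum_add q17 s8, Summable.tsum_add q16 s7, Summable.tsum_add q15 s6, Summable.tsum_add q14 s5,
      Summable.tsum_add q13 s4, Summable.tsum_add q12 s3, Summable.tsum_add s1 s2]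
    simp only [tsum_mul_left]
    rw [hp1.2, hp2.2, hp3.2, hp4.2, hp5.2, hp6.2, hp7.2]
    ring
  have hWfact := (summable_prod_of_nonneg (f := W) (fun q => hW0 q)).mp hWsum
  obtain ⟨hW1, hW2⟩ := hWfact
  -- pairing bound σ|F|(u₁)+σ|F|(u₂) ≤ W
  have hker0 : ∀ p₂ p₃ p₄ : Fin d → ℤ, 0 ≤ collisionKernel pF Vh p p₂ p₃ p₄ :=
    fun p₂ p₃ p₄ => kernel_nonneg pF Vh p p₂ p₃ p₄
  have hax : ∀ p₂ p₃ : Fin d → ℤ,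
      collisionKernel pF Vh p p₂ p₃ (p+p₂-p₃) * |Ff p₂ p₃ (p+p₂-p₃)|
        + collisionKernel pF Vh p p₂ p₃ (p₃-p+p₂) * |Ff p₂ p₃ (p₃-p+p₂)| ≤ W (p₂, p₃) := by
    intro p₂ p₃
    have k1 : collisionKernel pF Vh p p₂ p₃ (p+p₂-p₃) ≤ 4*Vh (p₃-p₂)^2 + 8*Vh (p-p₃)^2 := by
      have h := kernel_le pF Vh p p₂ p₃ (p+p₂-p₃)
      rwa [show p - (p+p₂-p₃) = p₃-p₂ from by abel] at h
    have k2 : collisionKernel pF Vh p p₂ p₃ (p₃-p+p₂) ≤ 4*Vh (p+p-p₂-p₃)^2 + 8*Vh (p-p₃)^2 := by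
      have h := kernel_le pF Vh p p₂ p₃ (p₃-p+p₂)
      rwa [show p - (p₃-p+p₂) = p+p-p₂-p₃ from by abel] at h
    obtain ⟨hF31, hF41⟩ := hFb p₂ p₃ (p+p₂-p₃)
    obtain ⟨hF32, hF42⟩ := hFb p₂ p₃ (p₃-p+p₂)
    have t1 : collisionKernel pF Vh p p₂ p₃ (p+p₂-p₃) * |Ff p₂ p₃ (p+p₂-p₃)|
        ≤ (4*Vh (p₃-p₂)^2) * (A^2*B*(|f p₃| + |f p₂|))
          + (8*Vh (p-p₃)^2) * (A^2*B*(|f (p+p₂-p₃)| + |f p₂|)) := by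
      calc collisionKernel pF Vh p p₂ p₃ (p+p₂-p₃) * |Ff p₂ p₃ (p+p₂-p₃)|
          ≤ (4*Vh (p₃-p₂)^2 + 8*Vh (p-p₃)^2) * |Ff p₂ p₃ (p+p₂-p₃)| :=
            mul_le_mul_of_nonneg_right k1 (abs_nonneg _)
        _ = (4*Vh (p₃-p₂)^2) * |Ff p₂ p₃ (p+p₂-p₃)|
            + (8*Vh (p-p₃)^2) * |Ff p₂ p₃ (p+p₂-p₃)| := by ring
        _ ≤ _ := add_le_add
            (mul_le_mul_of_nonneg_left hF31 (by positivity))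
            (mul_le_mul_of_nonneg_left hF41 (by positivity))
    have t2 : collisionKernel pF Vh p p₂ p₃ (p₃-p+p₂) * |Ff p₂ p₃ (p₃-p+p₂)|
        ≤ (4*Vh (p+p-p₂-p₃)^2) * (A^2*B*(|f p₃| + |f p₂|))
          + (8*Vh (p-p₃)^2) * (A^2*B*(|f (p₃-p+p₂)| + |f p₂|)) := by
      calc collisionKernel pF Vh p p₂ p₃ (p₃-p+p₂) * |Ff p₂ p₃ (p₃-p+p₂)|
          ≤ (4*Vh (p+p-p₂-p₃)^2 + 8*Vh (p-p₃)^2) * |Ff p₂ p₃ (p₃-p+p₂)| :=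
            mul_le_mul_of_nonneg_right k2 (abs_nonneg _)
        _ = (4*Vh (p+p-p₂-p₃)^2) * |Ff p₂ p₃ (p₃-p+p₂)|
            + (8*Vh (p-p₃)^2) * |Ff p₂ p₃ (p₃-p+p₂)| := by ring
        _ ≤ _ := add_le_add
            (mul_le_mul_of_nonneg_left hF32 (by positivity))
            (mul_le_mul_of_nonneg_left hF42 (by positivity))
    calc collisionKernel pF Vh p p₂ p₃ (p+p₂-p₃) * |Ff p₂ p₃ (p+p₂-p₃)|
          + collisionKernel pF Vh p p₂ p₃ (p₃-p+p₂) * |Ff p₂ p₃ (p₃-p+p₂)| ≤ _ :=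
        add_le_add t1 t2
      _ = W (p₂, p₃) := by simp only [hWdef]; ring
  -- pointwise bounds on a, b and their difference
  have hdT : ∀ E : ℝ, |deltaT t E| ≤ t := by
    intro E
    rw [deltaT, abs_mul, abs_of_pos ht, abs_of_nonneg (delta1_nonneg _)]
    have h1 := delta1_le (t*E)
    have h2 : 1/(2*π) ≤ (1:ℝ) := by
      rw [div_le_one (by positivity)]
      nlinarith [Real.pi_gt_three]
    nlinarith
  have hab : ∀ p₂ p₃ p₄ : Fin d → ℤ,
      |a p₂ p₃ p₄| ≤ t * (collisionKernel pF Vh p p₂ p₃ p₄ * |Ff p₂ p₃ p₄|) ∧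
      |b p₂ p₃ p₄| ≤ t * (collisionKernel pF Vh p p₂ p₃ p₄ * |Ff p₂ p₃ p₄|) ∧
      |a p₂ p₃ p₄ - b p₂ p₃ p₄| ≤ K * (collisionKernel pF Vh p p₂ p₃ p₄ * |Ff p₂ p₃ p₄|) := by
    intro p₂ p₃ p₄
    refine ⟨?_, ?_, ?_⟩
    · have heq : a p₂ p₃ p₄ = collisionKernel pF Vh p p₂ p₃ p₄ *
          deltaT t (disp pF lam Vh p + disp pF lam Vh p₂ - disp pF lam Vh p₃ - disp pF lam Vh p₄) *
          Ff p₂ p₃ p₄ := rfl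
      rw [heq, abs_mul, abs_mul, abs_of_nonneg (hker0 p₂ p₃ p₄)]
      calc collisionKernel pF Vh p p₂ p₃ p₄ * |deltaT t _| * |Ff p₂ p₃ p₄|
          ≤ collisionKernel pF Vh p p₂ p₃ p₄ * t * |Ff p₂ p₃ p₄| := by
            apply mul_le_mul_of_nonneg_right ?_ (abs_nonneg _)
            exact mul_le_mul_of_nonneg_left (hdT _) (hker0 p₂ p₃ p₄)
        _ = t * (collisionKernel pF Vh p p₂ p₃ p₄ * |Ff p₂ p₃ p₄|) := by ring
    · have heq : b p₂ p₃ p₄ = t * (collisionKernel pF Vh p p₂ p₃ p₄ * (1 / (2 * π)) *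
          (if freeDisp pF p + freeDisp pF p₂ - freeDisp pF p₃ - freeDisp pF p₄ = 0 then 1 else 0) *
          Ff p₂ p₃ p₄) := rfl
      rw [heq, abs_mul, abs_mul, abs_mul, abs_mul, abs_of_pos ht,
        abs_of_nonneg (hker0 p₂ p₃ p₄)]
      apply mul_le_mul_of_nonneg_left ?_ ht.le
      have hite : |(if freeDisp pF p + freeDisp pF p₂ - freeDisp pF p₃ - freeDisp pF p₄ = 0
          then (1:ℝ) else 0)| ≤ 1 := by split <;> norm_num
      have h2 : |1/(2*π)| ≤ (1:ℝ) := by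
        rw [abs_of_pos (by positivity : (0:ℝ) < 1/(2*π)), div_le_one (by positivity)]
        nlinarith [Real.pi_gt_three]
      apply mul_le_mul_of_nonneg_right ?_ (abs_nonneg (Ff p₂ p₃ p₄))
      calc collisionKernel pF Vh p p₂ p₃ p₄ * |1/(2*π)|
            * |(if freeDisp pF p + freeDisp pF p₂ - freeDisp pF p₃ - freeDisp pF p₄ = 0
                then (1:ℝ) else 0)|
          ≤ (collisionKernel pF Vh p p₂ p₃ p₄ * 1) * 1 := by
            apply mul_le_mul ?_ hite (abs_nonneg _) ?_
            · exact mul_le_mul_of_nonneg_left h2 (hker0 p₂ p₃ p₄)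
            · have := hker0 p₂ p₃ p₄; linarith
        _ = collisionKernel pF Vh p p₂ p₃ p₄ := by ring
    · have heq : a p₂ p₃ p₄ - b p₂ p₃ p₄ = (collisionKernel pF Vh p p₂ p₃ p₄ * Ff p₂ p₃ p₄) *
          (deltaT t (disp pF lam Vh p + disp pF lam Vh p₂ - disp pF lam Vh p₃ - disp pF lam Vh p₄)
            - t * (1/(2*π) * (if freeDisp pF p + freeDisp pF p₂ - freeDisp pF p₃ - freeDisp pF p₄ = 0
              then 1 else 0))) := by
        simp only [hadef, hbdef, hbidef]
        ring
      rw [heq, abs_mul, abs_mul, abs_of_nonneg (hker0 p₂ p₃ p₄)]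
      calc collisionKernel pF Vh p p₂ p₃ p₄ * |Ff p₂ p₃ p₄| * |_|
          ≤ collisionKernel pF Vh p p₂ p₃ p₄ * |Ff p₂ p₃ p₄| * K := by
            apply mul_le_mul_of_nonneg_left (hdelta p₂ p₃ p₄)
            exact mul_nonneg (hker0 p₂ p₃ p₄) (abs_nonneg _)
        _ = K * (collisionKernel pF Vh p p₂ p₃ p₄ * |Ff p₂ p₃ p₄|) := by ring
  -- vanishing off the two momentum-conservation points
  have hvanish : ∀ p₂ p₃ p₄ : Fin d → ℤ,
      p₄ ∉ ({p+p₂-p₃, p₃-p+p₂} : Finset (Fin d → ℤ)) → a p₂ p₃ p₄ = 0 ∧ b p₂ p₃ p₄ = 0 := by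
    intro p₂ p₃ p₄ hmem
    simp only [Finset.mem_insert, Finset.mem_singleton] at hmem
    push_neg at hmem
    have hk : collisionKernel pF Vh p p₂ p₃ p₄ = 0 := kernel_vanish hmem.1 hmem.2
    constructor
    · simp only [hadef]; rw [hk]; ring
    · simp only [hbdef, hbidef]; rw [hk]; ring
  have htsA : ∀ p₂ p₃ : Fin d → ℤ, (∑' p₄, a p₂ p₃ p₄)
      = ∑ p₄ ∈ ({p+p₂-p₃, p₃-p+p₂} : Finset (Fin d → ℤ)), a p₂ p₃ p₄ :=
    fun p₂ p₃ => tsum_eq_sum (fun x hx => (hvanish p₂ p₃ x hx).1)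
  have htsB : ∀ p₂ p₃ : Fin d → ℤ, (∑' p₄, b p₂ p₃ p₄)
      = ∑ p₄ ∈ ({p+p₂-p₃, p₃-p+p₂} : Finset (Fin d → ℤ)), b p₂ p₃ p₄ :=
    fun p₂ p₃ => tsum_eq_sum (fun x hx => (hvanish p₂ p₃ x hx).2)
  have hpairsum : ∀ (v : (Fin d → ℤ) → ℝ), (∀ x, 0 ≤ v x) → ∀ u₁ u₂ : Fin d → ℤ,
      ∑ x ∈ ({u₁, u₂} : Finset (Fin d → ℤ)), v x ≤ v u₁ + v u₂ := by
    intro v hv u₁ u₂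
    by_cases h : u₁ = u₂
    · subst h
      have hs : ({u₁, u₁} : Finset (Fin d → ℤ)) = {u₁} := by simp
      rw [hs, Finset.sum_singleton]
      linarith [hv u₁]
    · rw [Finset.sum_pair h]
  -- level 3 : p₄ sums
  have hd3 : ∀ p₂ p₃ : Fin d → ℤ,
      |(∑' p₄, a p₂ p₃ p₄) - (∑' p₄, b p₂ p₃ p₄)| ≤ K * W (p₂, p₃) := by
    intro p₂ p₃
    rw [htsA p₂ p₃, htsB p₂ p₃, ← Finset.sum_sub_distrib]
    calc |∑ x ∈ ({p+p₂-p₃, p₃-p+p₂} : Finset (Fin d → ℤ)), (a p₂ p₃ x - b p₂ p₃ x)|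
        ≤ ∑ x ∈ ({p+p₂-p₃, p₃-p+p₂} : Finset (Fin d → ℤ)), |a p₂ p₃ x - b p₂ p₃ x| :=
          Finset.abs_sum_le_sum_abs _ _
      _ ≤ ∑ x ∈ ({p+p₂-p₃, p₃-p+p₂} : Finset (Fin d → ℤ)),
            K * (collisionKernel pF Vh p p₂ p₃ x * |Ff p₂ p₃ x|) :=
          Finset.sum_le_sum (fun x _ => (hab p₂ p₃ x).2.2)
      _ = K * ∑ x ∈ ({p+p₂-p₃, p₃-p+p₂} : Finset (Fin d → ℤ)),
            collisionKernel pF Vh p p₂ p₃ x * |Ff p₂ p₃ x| := by rw [Finset.mul_sum]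
      _ ≤ K * (collisionKernel pF Vh p p₂ p₃ (p+p₂-p₃) * |Ff p₂ p₃ (p+p₂-p₃)|
            + collisionKernel pF Vh p p₂ p₃ (p₃-p+p₂) * |Ff p₂ p₃ (p₃-p+p₂)|) :=
          mul_le_mul_of_nonneg_left
            (hpairsum _ (fun x => mul_nonneg (hker0 p₂ p₃ x) (abs_nonneg _)) _ _) hK0
      _ ≤ K * W (p₂, p₃) := mul_le_mul_of_nonneg_left (hax p₂ p₃) hK0
  have ha3 : ∀ p₂ p₃ : Fin d → ℤ, |∑' p₄, a p₂ p₃ p₄| ≤ t * W (p₂, p₃) := by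
    intro p₂ p₃
    rw [htsA p₂ p₃]
    calc |∑ x ∈ ({p+p₂-p₃, p₃-p+p₂} : Finset (Fin d → ℤ)), a p₂ p₃ x|
        ≤ ∑ x ∈ ({p+p₂-p₃, p₃-p+p₂} : Finset (Fin d → ℤ)), |a p₂ p₃ x| :=
          Finset.abs_sum_le_sum_abs _ _
      _ ≤ ∑ x ∈ ({p+p₂-p₃, p₃-p+p₂} : Finset (Fin d → ℤ)),
            t * (collisionKernel pF Vh p p₂ p₃ x * |Ff p₂ p₃ x|) :=
          Finset.sum_le_sum (fun x _ => (hab p₂ p₃ x).1)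
      _ = t * ∑ x ∈ ({p+p₂-p₃, p₃-p+p₂} : Finset (Fin d → ℤ)),
            collisionKernel pF Vh p p₂ p₃ x * |Ff p₂ p₃ x| := by rw [Finset.mul_sum]
      _ ≤ t * (collisionKernel pF Vh p p₂ p₃ (p+p₂-p₃) * |Ff p₂ p₃ (p+p₂-p₃)|
            + collisionKernel pF Vh p p₂ p₃ (p₃-p+p₂) * |Ff p₂ p₃ (p₃-p+p₂)|) :=
          mul_le_mul_of_nonneg_left
            (hpairsum _ (fun x => mul_nonneg (hker0 p₂ p₃ x) (abs_nonneg _)) _ _) ht.le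
      _ ≤ t * W (p₂, p₃) := mul_le_mul_of_nonneg_left (hax p₂ p₃) ht.le
  have hb3 : ∀ p₂ p₃ : Fin d → ℤ, |∑' p₄, b p₂ p₃ p₄| ≤ t * W (p₂, p₃) := by
    intro p₂ p₃
    rw [htsB p₂ p₃]
    calc |∑ x ∈ ({p+p₂-p₃, p₃-p+p₂} : Finset (Fin d → ℤ)), b p₂ p₃ x|
        ≤ ∑ x ∈ ({p+p₂-p₃, p₃-p+p₂} : Finset (Fin d → ℤ)), |b p₂ p₃ x| :=
          Finset.abs_sum_le_sum_abs _ _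
      _ ≤ ∑ x ∈ ({p+p₂-p₃, p₃-p+p₂} : Finset (Fin d → ℤ)),
            t * (collisionKernel pF Vh p p₂ p₃ x * |Ff p₂ p₃ x|) :=
          Finset.sum_le_sum (fun x _ => (hab p₂ p₃ x).2.1)
      _ = t * ∑ x ∈ ({p+p₂-p₃, p₃-p+p₂} : Finset (Fin d → ℤ)),
            collisionKernel pF Vh p p₂ p₃ x * |Ff p₂ p₃ x| := by rw [Finset.mul_sum]
      _ ≤ t * (collisionKernel pF Vh p p₂ p₃ (p+p₂-p₃) * |Ff p₂ p₃ (p+p₂-p₃)|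
            + collisionKernel pF Vh p p₂ p₃ (p₃-p+p₂) * |Ff p₂ p₃ (p₃-p+p₂)|) :=
          mul_le_mul_of_nonneg_left
            (hpairsum _ (fun x => mul_nonneg (hker0 p₂ p₃ x) (abs_nonneg _)) _ _) ht.le
      _ ≤ t * W (p₂, p₃) := mul_le_mul_of_nonneg_left (hax p₂ p₃) ht.le
  -- level 2 : p₃ sums
  have hsA2 : ∀ p₂ : Fin d → ℤ, Summable (fun p₃ => ∑' p₄, a p₂ p₃ p₄) :=
    fun p₂ => summable_dom ((hW1 p₂).mul_left t) (fun p₃ => ha3 p₂ p₃)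
  have hsB2 : ∀ p₂ : Fin d → ℤ, Summable (fun p₃ => ∑' p₄, b p₂ p₃ p₄) :=
    fun p₂ => summable_dom ((hW1 p₂).mul_left t) (fun p₃ => hb3 p₂ p₃)
  have hd2 : ∀ p₂ : Fin d → ℤ,
      |(∑' p₃, ∑' p₄, a p₂ p₃ p₄) - (∑' p₃, ∑' p₄, b p₂ p₃ p₄)| ≤ K * ∑' p₃, W (p₂, p₃) := by
    intro p₂
    rw [← Summable.tsum_sub (hsA2 p₂) (hsB2 p₂)]
    calc |∑' p₃, ((∑' p₄, a p₂ p₃ p₄) - ∑' p₄, b p₂ p₃ p₄)|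
        ≤ ∑' p₃, |(∑' p₄, a p₂ p₃ p₄) - ∑' p₄, b p₂ p₃ p₄| :=
          abs_tsum_le' ((hsA2 p₂).sub (hsB2 p₂))
      _ ≤ ∑' p₃, K * W (p₂, p₃) :=
          Summable.tsum_le_tsum (fun p₃ => hd3 p₂ p₃) ((hsA2 p₂).sub (hsB2 p₂)).abs
            ((hW1 p₂).mul_left K)
      _ = K * ∑' p₃, W (p₂, p₃) := tsum_mul_left
  have ha2 : ∀ p₂ : Fin d → ℤ, |∑' p₃, ∑' p₄, a p₂ p₃ p₄| ≤ t * ∑' p₃, W (p₂, p₃) := by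
    intro p₂
    calc |∑' p₃, ∑' p₄, a p₂ p₃ p₄| ≤ ∑' p₃, |∑' p₄, a p₂ p₃ p₄| := abs_tsum_le' (hsA2 p₂)
      _ ≤ ∑' p₃, t * W (p₂, p₃) :=
          Summable.tsum_le_tsum (fun p₃ => ha3 p₂ p₃) (hsA2 p₂).abs ((hW1 p₂).mul_left t)
      _ = t * ∑' p₃, W (p₂, p₃) := tsum_mul_left
  have hb2 : ∀ p₂ : Fin d → ℤ, |∑' p₃, ∑' p₄, b p₂ p₃ p₄| ≤ t * ∑' p₃, W (p₂, p₃) := by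
    intro p₂
    calc |∑' p₃, ∑' p₄, b p₂ p₃ p₄| ≤ ∑' p₃, |∑' p₄, b p₂ p₃ p₄| := abs_tsum_le' (hsB2 p₂)
      _ ≤ ∑' p₃, t * W (p₂, p₃) :=
          Summable.tsum_le_tsum (fun p₃ => hb3 p₂ p₃) (hsB2 p₂).abs ((hW1 p₂).mul_left t)
      _ = t * ∑' p₃, W (p₂, p₃) := tsum_mul_left
  -- level 1 : p₂ sums
  have hsA1 : Summable (fun p₂ => ∑' p₃, ∑' p₄, a p₂ p₃ p₄) :=
    summable_dom (hW2.mul_left t) ha2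
  have hsB1 : Summable (fun p₂ => ∑' p₃, ∑' p₄, b p₂ p₃ p₄) :=
    summable_dom (hW2.mul_left t) hb2
  have hd1 : |(∑' p₂, ∑' p₃, ∑' p₄, a p₂ p₃ p₄) - (∑' p₂, ∑' p₃, ∑' p₄, b p₂ p₃ p₄)|
      ≤ K * (A^2*B*(48*((∑' k, Vh k^2) * S))) := by
    rw [← Summable.tsum_sub hsA1 hsB1]
    calc |∑' p₂, ((∑' p₃, ∑' p₄, a p₂ p₃ p₄) - ∑' p₃, ∑' p₄, b p₂ p₃ p₄)|
        ≤ ∑' p₂, |(∑' p₃, ∑' p₄, a p₂ p₃ p₄) - ∑' p₃, ∑' p₄, b p₂ p₃ p₄| :=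
          abs_tsum_le' (hsA1.sub hsB1)
      _ ≤ ∑' p₂, K * ∑' p₃, W (p₂, p₃) :=
          Summable.tsum_le_tsum (fun p₂ => hd2 p₂) (hsA1.sub hsB1).abs (hW2.mul_left K)
      _ = K * ∑' p₂, ∑' p₃, W (p₂, p₃) := tsum_mul_left
      _ = K * ∑' q : (Fin d → ℤ) × (Fin d → ℤ), W q := by rw [← Summable.tsum_prod' hWsum hW1]
      _ = K * (A^2*B*(48*((∑' k, Vh k^2) * S))) := by rw [hWtotal]
  -- assembling
  have hQtEq : Qt pF lam t Vh f p
      = 4 * π * ((2 * π) ^ (3 * d))⁻¹ * ∑' p₂, ∑' p₃, ∑' p₄, a p₂ p₃ p₄ := by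
    simp only [hadef]; rfl
  have hQlimEq : Qlim pF Vh f p
      = 4 * π * ((2 * π) ^ (3 * d))⁻¹ * ∑' p₂, ∑' p₃, ∑' p₄, bi p₂ p₃ p₄ := by
    simp only [hbidef]; rfl
  have htQlim : t * Qlim pF Vh f p
      = 4 * π * ((2 * π) ^ (3 * d))⁻¹ * ∑' p₂, ∑' p₃, ∑' p₄, b p₂ p₃ p₄ := by
    rw [hQlimEq]
    have hres : t * (4 * π * ((2 * π) ^ (3 * d))⁻¹ * ∑' p₂, ∑' p₃, ∑' p₄, bi p₂ p₃ p₄)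
        = 4 * π * ((2 * π) ^ (3 * d))⁻¹ * (t * ∑' p₂, ∑' p₃, ∑' p₄, bi p₂ p₃ p₄) := by ring
    rw [hres, ← tsum_mul_left]
    congr 1
    apply tsum_congr; intro p₂
    rw [← tsum_mul_left]
    apply tsum_congr; intro p₃
    rw [← tsum_mul_left]
  have hmain : |Qt pF lam t Vh f p - t * Qlim pF Vh f p|
      ≤ (4 * π * ((2 * π) ^ (3 * d))⁻¹) * (K * (A^2*B*(48*((∑' k, Vh k^2) * S)))) := by
    rw [hQtEq, htQlim, ← mul_sub]
    rw [abs_mul, abs_of_pos (show (0:ℝ) < 4 * π * ((2 * π) ^ (3 * d))⁻¹ by positivity)]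
    exact mul_le_mul_of_nonneg_left hd1 (by positivity)
  -- bound on ∑ Vh²
  have hT : ∑' k, |Vh k| = (2*π)^d * N := by
    rw [hNdef]
    unfold VhatL1
    field_simp
  have hV2sum : (∑' k, Vh k ^2) ≤ ((2*π)^d * N)^2 := by
    have h1 : ∀ k, Vh k^2 ≤ |Vh k| * ((2*π)^d * N) := by
      intro k
      rw [← hT]
      have h2 : Vh k^2 = |Vh k| * |Vh k| := by rw [← sq_abs, sq]
      rw [h2]
      exact mul_le_mul_of_nonneg_left (Summable.le_tsum hVh.abs k (fun _ _ => abs_nonneg _)) (abs_nonneg _)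
    calc ∑' k, Vh k^2 ≤ ∑' k, |Vh k| * ((2*π)^d * N) :=
          Summable.tsum_le_tsum h1 hVh2 (hVh.abs.mul_right _)
      _ = (∑' k, |Vh k|) * ((2*π)^d * N) := tsum_mul_right
      _ = ((2*π)^d * N)^2 := by rw [hT]; ring
  have hpd0 : (0:ℝ) < (2*π)^d := by positivity
  calc |Qt pF lam t Vh f p - t * Qlim pF Vh f p|
      ≤ (4 * π * ((2 * π) ^ (3 * d))⁻¹) * (K * (A^2*B*(48*((∑' k, Vh k^2) * S)))) := hmain
    _ ≤ (4 * π * ((2 * π) ^ (3 * d))⁻¹) * (K * (A^2*B*(48*((((2*π)^d * N1)^2) * S)))) := by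
        apply mul_le_mul_of_nonneg_left ?_ (by positivity)
        apply mul_le_mul_of_nonneg_left ?_ hK0
        apply mul_le_mul_of_nonneg_left ?_ (by positivity : (0:ℝ) ≤ A^2*B)
        apply mul_le_mul_of_nonneg_left ?_ (by norm_num : (0:ℝ) ≤ 48)
        apply mul_le_mul_of_nonneg_right ?_ hS0
        calc (∑' k, Vh k^2) ≤ ((2*π)^d * N)^2 := hV2sum
          _ ≤ ((2*π)^d * N1)^2 := by
              apply pow_le_pow_left₀ (by positivity)
              exact mul_le_mul_of_nonneg_left hVN1 hpd0.le
    _ = (2112*π*(1+N1+N1^2)*N1^2) * t * (1/t^2+(lam*t)^2) * A^2 * (((2*π)^d)⁻¹ * S) * B := by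
        rw [hKdef, show ((2:ℝ)*π)^(3*d) = (((2:ℝ)*π)^d)^3 from by rw [mul_comm 3 d, pow_mul]]
        field_simp
        ring
    _ ≤ 2112*π*(1+N1+N1^2)*(1+N1^2) * t * (1/t^2+(lam*t)^2) * A^2 * (((2*π)^d)⁻¹*S) * B := by
        have hc : (2112*π*(1+N1+N1^2)*N1^2) ≤ 2112*π*(1+N1+N1^2)*(1+N1^2) := by nlinarith
        apply mul_le_mul_of_nonneg_right ?_ hB0
        apply mul_le_mul_of_nonneg_right ?_ (mul_nonneg (by positivity) hS0)
        apply mul_le_mul_of_nonneg_right ?_ (by positivity : (0:ℝ) ≤ A^2)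
        apply mul_le_mul_of_nonneg_right ?_ (by positivity : (0:ℝ) ≤ 1/t^2+(lam*t)^2)
        apply mul_le_mul_of_nonneg_right hc ht.le
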